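/- Let c be a d×d correlation matrix, r the rank of its lower-right (d−1)×(d−1) block, and (m_r, k_r, p̃) an extended Cholesky decomposition of that block. With p, m, and č built as block matrices from this data (č having identity lower-right block and first row/column (1, (m_r^{-1}c_1^r)^T, 0)), one has c = p m č m^T p^T and č is itself a correlation matrix. -/

import Mathlib

open Matrix

lemma aux_psd {n : Type*} [Fintype n] [DecidableEq n] (w : n → ℝ) (hw : w ⬝ᵥ w ≤ 1) :
    (Matrix.fromBlocks (1 : Matrix Unit Unit ℝ) (Matrix.of fun _ j => w j)
      (Matrix.of fun i _ => w i) (1 : Matrix n n ℝ)).PosSemidef := by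
  rw [Matrix.posSemidef_iff_dotProduct_mulVec]
  constructor
  · show _ᴴ = _
    ext i j
    rcases i with i | k <;> rcases j with j | l <;>
      simp [Matrix.conjTranspose_apply, Matrix.fromBlocks, Matrix.one_apply, eq_comm]
  · intro x
    obtain ⟨t, y, rfl⟩ : ∃ t y, x = Sum.elim (fun _ : Unit => t) y :=
      ⟨x (Sum.inl ()), fun k => x (Sum.inr k), by
        funext k
        cases k with
        | inl u => cases u; rfl
        | inr k => rfl⟩
    have hstar : star (Sum.elim (fun _ : Unit => t) y) = Sum.elim (fun _ : Unit => t) y := by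
      simp
    rw [hstar, Matrix.fromBlocks_mulVec, sumElim_dotProduct_sumElim]
    simp only [Sum.elim_comp_inl, Sum.elim_comp_inr]
    have hWy : (Matrix.of fun _ j => w j) *ᵥ y = fun _ : Unit => w ⬝ᵥ y := rfl
    have hW2x : (Matrix.of fun i _ => w i) *ᵥ (fun _ : Unit => t) = t • w := by
      funext k
      simp [Matrix.mulVec, dotProduct, mul_comm]
    rw [hWy, hW2x, Matrix.one_mulVec, Matrix.one_mulVec, dotProduct_add, dotProduct_add,
      dotProduct_smul]
    have h1 : (fun _ : Unit => t) ⬝ᵥ (fun _ : Unit => t) = t * t := by simp [dotProduct]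
    have h2 : (fun _ : Unit => t) ⬝ᵥ (fun _ : Unit => w ⬝ᵥ y) = t * (w ⬝ᵥ y) := by
      simp [dotProduct]
    have hCS : (w ⬝ᵥ y) ^ 2 ≤ (w ⬝ᵥ w) * (y ⬝ᵥ y) := by
      have h := Finset.sum_mul_sq_le_sq_mul_sq Finset.univ w y
      simpa [dotProduct, sq] using h
    have hyy : 0 ≤ y ⬝ᵥ y := Finset.sum_nonneg fun i _ => mul_self_nonneg _
    have hyw : y ⬝ᵥ w = w ⬝ᵥ y := dotProduct_comm _ _
    have hww0 : 0 ≤ w ⬝ᵥ w := Finset.sum_nonneg fun i _ => mul_self_nonneg _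
    have hsm : y ⬝ᵥ t • w = t * (w ⬝ᵥ y) := by rw [dotProduct_smul, hyw, smul_eq_mul]
    simp only [h1, h2, smul_eq_mul, hyw]
    nlinarith [sq_nonneg (t + w ⬝ᵥ y), hCS, hyy, hw, hww0]



/-- A correlation matrix: symmetric positive semidefinite with unit diagonal. -/
def IsCorrelation {ι : Type*} [Fintype ι] (x : Matrix ι ι ℝ) : Prop :=
  x.PosSemidef ∧ ∀ i, x i i = 1

/-- Reduction of a correlation matrix via an extended Cholesky decomposition of its
lower-right block: `c = p m č mᵀ pᵀ` where `č` is again a correlation matrix with identity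
lower-right block. The index set `Unit ⊕ (Fin r ⊕ Fin s)` encodes the block sizes
`1 + r + s = d` with `r` the rank of the lower-right block. -/
theorem stmt12 (r s : ℕ)
    (c : Matrix (Unit ⊕ (Fin r ⊕ Fin s)) (Unit ⊕ (Fin r ⊕ Fin s)) ℝ)
    (hc : IsCorrelation c)
    (hrank : (c.submatrix Sum.inr Sum.inr).rank = r)
    (σ : Equiv.Perm (Fin r ⊕ Fin s))
    (ptilde : Matrix (Fin r ⊕ Fin s) (Fin r ⊕ Fin s) ℝ)
    (hp : ∀ i j, ptilde i j = if σ j = i then 1 else 0)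
    (mr : Matrix (Fin r) (Fin r) ℝ)
    (hmr_lower : ∀ i j : Fin r, i < j → mr i j = 0)
    (hmr_inv : IsUnit mr.det)
    (kr : Matrix (Fin s) (Fin r) ℝ)
    (hchol : ptilde * c.submatrix Sum.inr Sum.inr * ptildeᵀ =
      Matrix.fromBlocks mr 0 kr 0 * (Matrix.fromBlocks mr 0 kr 0)ᵀ)
    (p m cch : Matrix (Unit ⊕ (Fin r ⊕ Fin s)) (Unit ⊕ (Fin r ⊕ Fin s)) ℝ)
    (hpdef : p = Matrix.fromBlocks 1 0 0 ptildeᵀ)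
    (hmdef : m = Matrix.fromBlocks 1 0 0 (Matrix.fromBlocks mr 0 kr 0))
    (v : Fin r → ℝ)
    (hvdef : v = mr⁻¹.mulVec (fun i => (pᵀ * c * p) (Sum.inl ()) (Sum.inr (Sum.inl i))))
    (hcch : cch = Matrix.fromBlocks 1
      (Matrix.of fun _ j => Sum.elim v (fun _ => 0) j)
      (Matrix.of fun i _ => Sum.elim v (fun _ => 0) i) 1) :
    c = p * m * cch * mᵀ * pᵀ ∧ IsCorrelation cch := by
  obtain ⟨hpsd, hdiag⟩ := hc
  classical
  set M : Matrix (Fin r ⊕ Fin s) (Fin r ⊕ Fin s) ℝ := Matrix.fromBlocks mr 0 kr 0 with hMdef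
  -- symmetry of c
  have hcsym : cᵀ = c := by
    have h := hpsd.1
    ext i j
    have := congrFun (congrFun h i) j
    simpa using this
  -- orthogonality of ptilde
  have hpt1 : ptildeᵀ * ptilde = 1 := by
    ext i j
    simp only [mul_apply, transpose_apply, hp, one_apply]
    rw [Finset.sum_eq_single (σ i)]
    · simp [σ.injective.eq_iff, eq_comm]
    · intro k _ hk; simp [Ne.symm hk]
    · simp
  have hpt2 : ptilde * ptildeᵀ = 1 := mul_eq_one_comm.mp hpt1
  have hpT : pᵀ = Matrix.fromBlocks 1 0 0 ptilde := by
    rw [hpdef, fromBlocks_transpose]; simp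
  have hpp2 : p * pᵀ = 1 := by
    rw [hpT, hpdef, fromBlocks_multiply]
    simp [hpt1, ← fromBlocks_one]
  -- block description of c' = pᵀ * c * p
  have hc' : pᵀ * c * p = Matrix.fromBlocks c.toBlocks₁₁ (c.toBlocks₁₂ * ptildeᵀ)
      (ptilde * c.toBlocks₂₁) (ptilde * c.toBlocks₂₂ * ptildeᵀ) := by
    conv_lhs => rw [← fromBlocks_toBlocks c]
    rw [hpT, hpdef, fromBlocks_multiply, fromBlocks_multiply]
    simp [Matrix.mul_assoc]
  set B : Matrix Unit (Fin r ⊕ Fin s) ℝ := c.toBlocks₁₂ * ptildeᵀ with hBdef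
  have hA : c.toBlocks₁₁ = (1 : Matrix Unit Unit ℝ) := by
    ext i j
    cases i; cases j
    simp [Matrix.toBlocks₁₁, hdiag, Matrix.one_apply]
  have hDblock : ptilde * c.toBlocks₂₂ * ptildeᵀ = M * Mᵀ := hchol
  have hCB : ptilde * c.toBlocks₂₁ = Bᵀ := by
    rw [hBdef, transpose_mul, transpose_transpose]
    congr 1
    ext i j
    simp only [Matrix.toBlocks₂₁, Matrix.toBlocks₁₂, transpose_apply, Matrix.of_apply]
    exact (congrFun (congrFun hcsym (Sum.inr i)) (Sum.inl j)).symm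
  have hBH : Bᴴ = Bᵀ := by ext i j; simp
  have hc'2 : pᵀ * c * p = Matrix.fromBlocks 1 B Bᴴ (M * Mᵀ) := by
    rw [hc', hA, hDblock, hCB, hBH]
  -- c' is PSD
  have hc'psd : (Matrix.fromBlocks 1 B Bᴴ (M * Mᵀ)).PosSemidef := by
    rw [← hc'2]
    have := hpsd.conjTranspose_mul_mul_same p
    have hpH : pᴴ = pᵀ := by ext i j; simp
    rwa [hpH] at this
  -- Schur complement is PSD
  haveI : Invertible (1 : Matrix Unit Unit ℝ) := invertibleOne
  have hE : ((M * Mᵀ) - Bᴴ * (1 : Matrix Unit Unit ℝ)⁻¹ * B).PosSemidef :=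
    (Matrix.PosDef.fromBlocks₁₁ B (M * Mᵀ) Matrix.PosDef.one).mp hc'psd
  have hE' : ((M * Mᵀ) - Bᵀ * B).PosSemidef := by
    rwa [inv_one, Matrix.mul_one, hBH] at hE
  set b : (Fin r ⊕ Fin s) → ℝ := fun j => B () j with hbdef
  -- key quadratic inequality
  have hQ : ∀ z : (Fin r ⊕ Fin s) → ℝ, (b ⬝ᵥ z) ^ 2 ≤ (Mᵀ *ᵥ z) ⬝ᵥ (Mᵀ *ᵥ z) := by
    intro z
    have h0 := hE'.dotProduct_mulVec_nonneg z
    have hstar : star z = z := by simp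
    rw [hstar, Matrix.sub_mulVec, dotProduct_sub] at h0
    have h1 : z ⬝ᵥ ((M * Mᵀ) *ᵥ z) = (Mᵀ *ᵥ z) ⬝ᵥ (Mᵀ *ᵥ z) := by
      rw [← Matrix.mulVec_mulVec, Matrix.dotProduct_mulVec, Matrix.mulVec_transpose]
    have h2 : z ⬝ᵥ ((Bᵀ * B) *ᵥ z) = (b ⬝ᵥ z) ^ 2 := by
      rw [← Matrix.mulVec_mulVec, Matrix.dotProduct_mulVec, ← Matrix.mulVec_transpose,
        transpose_transpose]
      have hBz : B *ᵥ z = fun _ => b ⬝ᵥ z := by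
        funext u; cases u; rfl
      rw [hBz]
      simp [dotProduct, sq]
    rw [h1, h2] at h0
    linarith
  -- helper: (A *ᵥ v) ⬝ᵥ y = v ⬝ᵥ (Aᵀ *ᵥ y)
  have mvdp : ∀ {α β : Type} [Fintype α] [Fintype β] (A : Matrix α β ℝ) (u : β → ℝ) (y : α → ℝ),
      (A *ᵥ u) ⬝ᵥ y = u ⬝ᵥ (Aᵀ *ᵥ y) := by
    intro α β _ _ A u y
    rw [dotProduct_comm, Matrix.dotProduct_mulVec, ← Matrix.mulVec_transpose, dotProduct_comm]
  set w : (Fin r ⊕ Fin s) → ℝ := Sum.elim v (fun _ => 0) with hwdef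
  have hMT : Mᵀ = Matrix.fromBlocks mrᵀ krᵀ 0 0 := by
    rw [hMdef, fromBlocks_transpose]; simp
  have hmrT_inv : IsUnit mrᵀ.det := by rwa [Matrix.det_transpose]
  have hb1 : mr *ᵥ v = fun i => b (Sum.inl i) := by
    have hveq : v = mr⁻¹ *ᵥ (fun i => b (Sum.inl i)) := by
      rw [hvdef]
      congr 1
      funext i
      rw [hc'2]
      rfl
    rw [hveq, Matrix.mulVec_mulVec, Matrix.mul_nonsing_inv _ hmr_inv, Matrix.one_mulVec]
  have hbM : b = M *ᵥ w := by
    have hMw : M *ᵥ w = Sum.elim (mr *ᵥ v) (kr *ᵥ v) := by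
      rw [hMdef, hwdef, Matrix.fromBlocks_mulVec]
      simp
    funext j
    cases j with
    | inl i =>
      rw [hMw]
      exact (congrFun hb1 i).symm
    | inr j =>
      rw [hMw]
      show b (Sum.inr j) = (kr *ᵥ v) j
      set e : Fin s → ℝ := Pi.single j 1 with hedef
      set u : Fin r → ℝ := krᵀ *ᵥ e with hudef
      set z1 : Fin r → ℝ := -((mrᵀ)⁻¹ *ᵥ u) with hz1def
      have hz : Mᵀ *ᵥ (Sum.elim z1 e) = 0 := by
        funext k
        rw [hMT, Matrix.fromBlocks_mulVec]
        cases k <;>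
          simp [hz1def, Matrix.mulVec_neg, Matrix.mulVec_mulVec, ← Matrix.mul_assoc,
            Matrix.mul_nonsing_inv _ hmrT_inv, hudef, Matrix.one_mul]
      have h0 := hQ (Sum.elim z1 e)
      rw [hz] at h0
      simp only [dotProduct_zero] at h0
      have hb0 : b ⬝ᵥ Sum.elim z1 e = 0 := by nlinarith [sq_nonneg (b ⬝ᵥ Sum.elim z1 e)]
      have hbsplit : b = Sum.elim (fun i => b (Sum.inl i)) (fun j => b (Sum.inr j)) := by
        funext k; cases k <;> rfl
      rw [hbsplit, sumElim_dotProduct_sumElim] at hb0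
      have he : (fun j => b (Sum.inr j)) ⬝ᵥ e = b (Sum.inr j) := by
        rw [hedef, dotProduct_single, mul_one]
      have hz1dp : (fun i => b (Sum.inl i)) ⬝ᵥ z1 = -(v ⬝ᵥ u) := by
        rw [← hb1, hz1def, dotProduct_neg, mvdp, Matrix.mulVec_mulVec,
          Matrix.mul_nonsing_inv _ hmrT_inv, Matrix.one_mulVec]
      have hkv : (kr *ᵥ v) j = v ⬝ᵥ u := by
        have : (kr *ᵥ v) ⬝ᵥ e = (kr *ᵥ v) j := by rw [hedef, dotProduct_single, mul_one]
        rw [← this, mvdp, ← hudef]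
      rw [he, hz1dp] at hb0
      rw [hkv]
      linarith
  have hww : w ⬝ᵥ w = v ⬝ᵥ v := by
    rw [hwdef, sumElim_dotProduct_sumElim]; simp
  have hv1 : v ⬝ᵥ v ≤ 1 := by
    set z : (Fin r ⊕ Fin s) → ℝ := Sum.elim ((mrᵀ)⁻¹ *ᵥ v) 0 with hzdef
    have hMz : Mᵀ *ᵥ z = w := by
      funext k
      rw [hMT, hzdef, Matrix.fromBlocks_mulVec]
      cases k <;>
        simp [hwdef, Matrix.mulVec_mulVec, Matrix.mul_nonsing_inv _ hmrT_inv]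
    have hbz : b ⬝ᵥ z = v ⬝ᵥ v := by
      rw [hbM, mvdp, hMz, hww]
    have h0 := hQ z
    rw [hMz, hbz, hww] at h0
    nlinarith [h0]
  -- block computation of m * cch * mᵀ
  set W : Matrix Unit (Fin r ⊕ Fin s) ℝ := Matrix.of fun _ j => w j with hWdef
  set W2 : Matrix (Fin r ⊕ Fin s) Unit ℝ := Matrix.of fun i _ => w i with hW2def
  have hmT : mᵀ = Matrix.fromBlocks 1 0 0 Mᵀ := by rw [hmdef, fromBlocks_transpose]; simp
  have hmc : m * cch * mᵀ = Matrix.fromBlocks 1 (W * Mᵀ) (M * W2) (M * Mᵀ) := by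
    rw [hmT, hmdef, hcch, fromBlocks_multiply, fromBlocks_multiply]
    simp
  have hBW : B = W * Mᵀ := by
    ext u' j
    cases u'
    have h1 : (W * Mᵀ) () j = (M *ᵥ w) j := by
      simp [mul_apply, Matrix.mulVec, dotProduct, hWdef, mul_comm]
    rw [h1, ← hbM]
  have hW2W : W2 = Wᵀ := by ext i u'; rfl
  have hCW : Bᴴ = M * W2 := by
    rw [hBH, hBW, transpose_mul, transpose_transpose, hW2W]
  have key : pᵀ * c * p = m * cch * mᵀ := by rw [hc'2, hmc, hCW, hBW]
  have hgoal1 : c = p * m * cch * mᵀ * pᵀ := by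
    calc c = (p * pᵀ) * c * (p * pᵀ) := by rw [hpp2, Matrix.one_mul, Matrix.mul_one]
    _ = p * (pᵀ * c * p) * pᵀ := by simp only [Matrix.mul_assoc]
    _ = p * (m * cch * mᵀ) * pᵀ := by rw [key]
    _ = p * m * cch * mᵀ * pᵀ := by simp only [Matrix.mul_assoc]
  refine ⟨hgoal1, ?_, ?_⟩
  · rw [hcch]
    exact aux_psd w (by rw [hww]; exact hv1)
  · intro i
    rcases i with i | k
    · cases i
      simp [hcch, Matrix.fromBlocks]
    · simp [hcch, Matrix.fromBlocks, hWdef, hW2def, Matrix.one_apply]
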